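/- Let G be a finite cyclic group of order n ≥ 5 and H ≠ {e} a subgroup. Then the generalized non-coprime graph Γ_{G,H} is chordal if and only if either H is a p-group for some prime p, or (H = G and |G| has at most three distinct prime divisors). -/

import Mathlib

set_option maxHeartbeats 1000000

open SimpleGraph

section Helpers

lemma myExistsOrder {G : Type*} [Group G] [Fintype G] (hG : IsCyclic G) {d : ℕ}
    (hd : d ∣ Fintype.card G) (hd0 : 0 < d) : ∃ x : G, orderOf x = d := by
  classical
  have h := IsCyclic.card_orderOf_eq_totient (α := G) hd
  have : 0 < (Finset.univ.filter fun a : G => orderOf a = d).card := by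
    rw [h]; exact Nat.totient_pos.mpr hd0
  obtain ⟨x, hx⟩ := Finset.card_pos.mp this
  exact ⟨x, (Finset.mem_filter.mp hx).2⟩

lemma myMemIff {G : Type*} [Group G] [Fintype G] (hG : IsCyclic G) (H : Subgroup G)
    (x : G) : x ∈ H ↔ orderOf x ∣ Nat.card H := by
  classical
  constructor
  · intro hx
    have : orderOf (⟨x, hx⟩ : H) ∣ Nat.card H := orderOf_dvd_natCard _
    rwa [Subgroup.orderOf_mk] at this
  · intro hdvd
    set m := Nat.card H with hm
    have hS : ∀ y : G, y ∈ H → y ^ m = 1 := by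
      intro y hy
      have : (⟨y, hy⟩ : H) ^ m = 1 := pow_card_eq_one'
      exact_mod_cast congrArg (Subgroup.subtype H) this
    set S : Finset G := Finset.univ.filter (fun a => a ^ m = 1) with hSdef
    have hsub : (H : Set G).toFinset ⊆ S := by
      intro y hy
      simp only [Set.mem_toFinset, SetLike.mem_coe] at hy
      simp [hSdef, hS y hy]
    have hcardH : (H : Set G).toFinset.card = m := by
      rw [Set.toFinset_card]; rw [hm, Nat.card_eq_fintype_card]; rfl
    have hcardS : S.card ≤ m := IsCyclic.card_pow_eq_one_le (by
      have : 0 < m := Nat.card_pos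
      exact this)
    have heq : (H : Set G).toFinset = S :=
      Finset.eq_of_subset_of_card_le hsub (by omega)
    have hxS : x ∈ S := by
      simp [hSdef, orderOf_dvd_iff_pow_eq_one.mp hdvd]
    rw [← heq] at hxS
    simpa using hxS

lemma myFinset4 {N S₀ S₁ S₂ S₃ : Finset ℕ} (hN : N.card ≤ 3)
    (hs0 : S₀ ⊆ N) (hs2 : S₂ ⊆ N) (hn0 : S₀.Nonempty) (hn2 : S₂.Nonempty)
    (h01 : (S₀ ∩ S₁).Nonempty) (h12 : (S₁ ∩ S₂).Nonempty)
    (h23 : (S₂ ∩ S₃).Nonempty) (h30 : (S₃ ∩ S₀).Nonempty)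
    (d02 : Disjoint S₀ S₂) (d13 : Disjoint S₁ S₃) : False := by
  rcases Nat.lt_or_ge S₀.card 2 with h0 | h0
  · have : S₀.card = 1 := by
      have := Finset.card_pos.mpr hn0; omega
    obtain ⟨p, hp⟩ := Finset.card_eq_one.mp this
    subst hp
    obtain ⟨r, hr⟩ := h01
    obtain ⟨u, hu⟩ := h30
    simp only [Finset.mem_inter, Finset.mem_singleton] at hr hu
    exact (Finset.disjoint_left.mp d13) (hr.1 ▸ hr.2) (hu.2 ▸ hu.1)
  rcases Nat.lt_or_ge S₂.card 2 with h2 | h2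
  · have : S₂.card = 1 := by
      have := Finset.card_pos.mpr hn2; omega
    obtain ⟨p, hp⟩ := Finset.card_eq_one.mp this
    subst hp
    obtain ⟨r, hr⟩ := h12
    obtain ⟨u, hu⟩ := h23
    simp only [Finset.mem_inter, Finset.mem_singleton] at hr hu
    exact (Finset.disjoint_left.mp d13) (hr.2 ▸ hr.1) (hu.1 ▸ hu.2)
  · have hun : (S₀ ∪ S₂).card = S₀.card + S₂.card := Finset.card_union_of_disjoint d02
    have : (S₀ ∪ S₂).card ≤ N.card := Finset.card_le_card (Finset.union_subset hs0 hs2)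
    omega

lemma myFinset5 {N S₀ S₁ S₂ S₃ S₄ : Finset ℕ} (hN : N.card ≤ 3)
    (hs0 : S₀ ⊆ N) (hs2 : S₂ ⊆ N) (hs3 : S₃ ⊆ N) (hn0 : S₀.Nonempty)
    (h12 : (S₁ ∩ S₂).Nonempty)
    (h23 : (S₂ ∩ S₃).Nonempty) (h34 : (S₃ ∩ S₄).Nonempty)
    (d02 : Disjoint S₀ S₂) (d03 : Disjoint S₀ S₃) (d13 : Disjoint S₁ S₃)
    (d24 : Disjoint S₂ S₄) : False := by
  rcases Nat.lt_or_ge S₂.card 2 with h2 | h2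
  · have : S₂.card = 1 := by
      have : 0 < S₂.card := Finset.card_pos.mpr ⟨h12.choose, (Finset.mem_inter.mp h12.choose_spec).2⟩
      omega
    obtain ⟨p, hp⟩ := Finset.card_eq_one.mp this
    subst hp
    obtain ⟨r, hr⟩ := h12
    obtain ⟨u, hu⟩ := h23
    simp only [Finset.mem_inter, Finset.mem_singleton] at hr hu
    exact (Finset.disjoint_left.mp d13) (hr.2 ▸ hr.1) (hu.1 ▸ hu.2)
  rcases Nat.lt_or_ge S₃.card 2 with h3 | h3
  · have : S₃.card = 1 := by
      have : 0 < S₃.card := Finset.card_pos.mpr ⟨h23.choose, (Finset.mem_inter.mp h23.choose_spec).2⟩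
      omega
    obtain ⟨p, hp⟩ := Finset.card_eq_one.mp this
    subst hp
    obtain ⟨r, hr⟩ := h23
    obtain ⟨u, hu⟩ := h34
    simp only [Finset.mem_inter, Finset.mem_singleton] at hr hu
    exact (Finset.disjoint_left.mp d24) (hr.2 ▸ hr.1) (hu.1 ▸ hu.2)
  · have d0u : Disjoint S₀ (S₂ ∪ S₃) := Finset.disjoint_union_right.mpr ⟨d02, d03⟩
    have hcard : (S₀ ∪ (S₂ ∪ S₃)).card = S₀.card + (S₂ ∪ S₃).card :=
      Finset.card_union_of_disjoint d0u
    have hsub : (S₀ ∪ (S₂ ∪ S₃)).card ≤ N.card :=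
      Finset.card_le_card (Finset.union_subset hs0 (Finset.union_subset hs2 hs3))
    have h0pos : 0 < S₀.card := Finset.card_pos.mpr hn0
    have hu2 : (S₂ ∪ S₃).card ≤ 2 := by omega
    have e2 : S₂ = S₂ ∪ S₃ :=
      Finset.eq_of_subset_of_card_le Finset.subset_union_left (by omega)
    have h32 : S₃ ⊆ S₂ := e2 ▸ Finset.subset_union_right
    have h2u : S₂.card ≤ (S₂ ∪ S₃).card := Finset.card_le_card Finset.subset_union_left
    have e3 : S₃ = S₂ := Finset.eq_of_subset_of_card_le h32 (by omega)
    obtain ⟨r, hr⟩ := h12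
    simp only [Finset.mem_inter] at hr
    exact (Finset.disjoint_left.mp d13) hr.1 (e3 ▸ hr.2)

variable {V : Type*} {Gr : SimpleGraph V}

lemma myChord4 {v : V} (w : Gr.Walk v v) (hc : w.IsCycle) (hl : w.length = 4) :
    ∃ a₀ a₁ a₂ a₃ : V, a₀ ∈ w.support ∧ a₁ ∈ w.support ∧ a₂ ∈ w.support ∧ a₃ ∈ w.support ∧
      a₀ ≠ a₁ ∧ a₀ ≠ a₂ ∧ a₀ ≠ a₃ ∧ a₁ ≠ a₂ ∧ a₁ ≠ a₃ ∧ a₂ ≠ a₃ ∧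
      Gr.Adj a₀ a₁ ∧ Gr.Adj a₁ a₂ ∧ Gr.Adj a₂ a₃ ∧ Gr.Adj a₃ a₀ ∧
      s(a₀, a₂) ∉ w.edges ∧ s(a₁, a₃) ∉ w.edges := by
  cases w with
  | nil => simp at hl
  | cons h01 w1 =>
  rename_i b
  cases w1 with
  | nil => simp at hl
  | cons h12 w2 =>
  rename_i c
  cases w2 with
  | nil => simp at hl
  | cons h23 w3 =>
  rename_i d
  cases w3 with
  | nil => simp at hl
  | cons h34 w4 =>
  rename_i e
  cases w4 with
  | cons h45 w5 => simp [Walk.length_cons] at hl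
  | nil =>
  rw [Walk.isCycle_def] at hc
  have hnd := hc.2.2
  simp only [Walk.support_cons, Walk.support_nil, List.tail_cons, List.nodup_cons,
    List.mem_cons, List.mem_singleton, not_or, List.not_mem_nil, List.nodup_nil] at hnd
  obtain ⟨⟨hbc, hbd, hbv⟩, ⟨hcd, hcv, -⟩, ⟨hdv, -⟩, -⟩ := hnd
  refine ⟨v, b, c, d, by simp, by simp, by simp, by simp,
    h01.ne, Ne.symm hcv, Ne.symm hdv, hbc, hbd, hcd, h01, h12, h23, h34, ?_, ?_⟩
  · intro hmem
    simp only [Walk.edges_cons, Walk.edges_nil, List.mem_cons, List.not_mem_nil, or_false] at hmem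
    rcases hmem with h | h | h | h <;> (rw [Sym2.eq_iff] at h; tauto)
  · intro hmem
    simp only [Walk.edges_cons, Walk.edges_nil, List.mem_cons, List.not_mem_nil, or_false] at hmem
    have hbv' := h01.ne
    rcases hmem with h | h | h | h <;> (rw [Sym2.eq_iff] at h; tauto)

lemma myChord5 {v : V} (w : Gr.Walk v v) (hc : w.IsCycle) (hl : 5 ≤ w.length) :
    ∃ a₀ a₁ a₂ a₃ a₄ : V,
      a₀ ∈ w.support ∧ a₁ ∈ w.support ∧ a₂ ∈ w.support ∧ a₃ ∈ w.support ∧ a₄ ∈ w.support ∧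
      a₀ ≠ a₂ ∧ a₀ ≠ a₃ ∧ a₁ ≠ a₃ ∧ a₁ ≠ a₄ ∧ a₂ ≠ a₄ ∧
      Gr.Adj a₀ a₁ ∧ Gr.Adj a₁ a₂ ∧ Gr.Adj a₂ a₃ ∧ Gr.Adj a₃ a₄ ∧
      s(a₀, a₂) ∉ w.edges ∧ s(a₀, a₃) ∉ w.edges ∧ s(a₁, a₃) ∉ w.edges ∧
      s(a₁, a₄) ∉ w.edges ∧ s(a₂, a₄) ∉ w.edges := by
  cases w with
  | nil => simp at hl
  | cons h01 w1 =>
  rename_i b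
  cases w1 with
  | nil => simp at hl
  | cons h12 w2 =>
  rename_i c
  cases w2 with
  | nil => simp at hl
  | cons h23 w3 =>
  rename_i d
  cases w3 with
  | nil => simp at hl
  | cons h34 w4 =>
  rename_i e
  cases w4 with
  | nil => simp at hl
  | cons h45 q =>
  rename_i f
  rw [Walk.isCycle_def] at hc
  have hnd := hc.2.2
  simp only [Walk.support_cons, List.tail_cons, List.nodup_cons, List.mem_cons, not_or] at hnd
  obtain ⟨⟨hbc, hbd, hbe, hbq⟩, ⟨hcd, hce, hcq⟩, ⟨hde, hdq⟩, heq, hqnd⟩ := hnd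
  have hvq : v ∈ q.support := q.end_mem_support
  have hfq : f ∈ q.support := q.start_mem_support
  have hvb : v ≠ b := fun h => hbq (h ▸ hvq)
  have hvc : v ≠ c := fun h => hcq (h ▸ hvq)
  have hvd : v ≠ d := fun h => hdq (h ▸ hvq)
  have hve : v ≠ e := fun h => heq (h ▸ hvq)
  have hbf : b ≠ f := fun h => hbq (h ▸ hfq)
  have hcf : c ≠ f := fun h => hcq (h ▸ hfq)
  have hdf : d ≠ f := fun h => hdq (h ▸ hfq)
  refine ⟨v, b, c, d, e, by simp, by simp, by simp, by simp, by simp,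
    hvc, hvd, hbd, hbe, hce, h01, h12, h23, h34, ?_, ?_, ?_, ?_, ?_⟩ <;>
  · intro hmem
    simp only [Walk.edges_cons, List.mem_cons] at hmem
    rcases hmem with h | h | h | h | h | h
    · rw [Sym2.eq_iff] at h; tauto
    · rw [Sym2.eq_iff] at h; tauto
    · rw [Sym2.eq_iff] at h; tauto
    · rw [Sym2.eq_iff] at h; tauto
    · rw [Sym2.eq_iff] at h; tauto
    · first
      | exact hbq (q.fst_mem_support_of_mem_edges h)
      | exact hcq (q.fst_mem_support_of_mem_edges h)
      | exact hdq (q.fst_mem_support_of_mem_edges h)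
      | exact hcq (q.snd_mem_support_of_mem_edges h)
      | exact hdq (q.snd_mem_support_of_mem_edges h)

lemma myCycle4 {a b c d : V} (hab : Gr.Adj a b) (hbc : Gr.Adj b c)
    (hcd : Gr.Adj c d) (hda : Gr.Adj d a) (hac : a ≠ c) (hbd : b ≠ d) :
    (Walk.cons hab (Walk.cons hbc (Walk.cons hcd (Walk.cons hda Walk.nil)))).IsCycle := by
  have h1 : a ≠ b := hab.ne
  have h2 : b ≠ c := hbc.ne
  have h3 : c ≠ d := hcd.ne
  have h4 : d ≠ a := hda.ne
  rw [Walk.isCycle_def]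
  refine ⟨⟨?_⟩, by simp, ?_⟩
  · simp only [Walk.edges_cons, Walk.edges_nil, List.nodup_cons, List.mem_cons,
      List.not_mem_nil, or_false, List.nodup_nil, and_true, Sym2.eq, Sym2.rel_iff',
      Prod.mk.injEq, Prod.swap_prod_mk]
    constructor
    · push_neg; refine ⟨⟨?_,?_⟩,⟨?_,?_⟩,⟨?_,?_⟩⟩ <;> tauto
    constructor
    · push_neg; refine ⟨⟨?_,?_⟩,⟨?_,?_⟩⟩ <;> tauto
    · push_neg; refine ⟨?_,?_⟩ <;> tauto
  · simp only [Walk.support_cons, Walk.support_nil, List.tail_cons, List.nodup_cons,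
      List.mem_cons, List.not_mem_nil, or_false, List.nodup_nil, and_true,
      List.mem_singleton]
    push_neg
    exact ⟨⟨h2, hbd, h1.symm⟩, ⟨h3, hac.symm⟩, h4, trivial⟩

lemma myNoChord {a b c d : V}
    (hab : Gr.Adj a b) (hbc : Gr.Adj b c) (hcd : Gr.Adj c d) (hda : Gr.Adj d a)
    (hnac : ¬ Gr.Adj a c) (hnbd : ¬ Gr.Adj b d) (hac : a ≠ c) (hbd : b ≠ d)
    (hL : ∀ (v : V) (w : Gr.Walk v v), w.IsCycle → 4 ≤ w.length →
        ∃ x ∈ w.support, ∃ y ∈ w.support, Gr.Adj x y ∧ s(x, y) ∉ w.edges) : False := by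
  set w : Gr.Walk a a :=
    Walk.cons hab (Walk.cons hbc (Walk.cons hcd (Walk.cons hda Walk.nil))) with hw
  obtain ⟨x, hx, y, hy, hadj, hedge⟩ := hL a w (myCycle4 hab hbc hcd hda hac hbd)
    (by rw [hw]; simp only [Walk.length_cons, Walk.length_nil]; omega)
  simp only [hw, Walk.support_cons, Walk.support_nil, List.mem_cons, List.not_mem_nil,
    or_false, List.mem_singleton] at hx hy
  have hx' : x = a ∨ x = b ∨ x = c ∨ x = d := by tauto
  have hy' : y = a ∨ y = b ∨ y = c ∨ y = d := by tauto
  apply hedge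
  simp only [hw, Walk.edges_cons, Walk.edges_nil, List.mem_cons, List.not_mem_nil, or_false]
  rcases hx' with rfl | rfl | rfl | rfl <;> rcases hy' with rfl | rfl | rfl | rfl <;>
    first
      | exact absurd hadj (Gr.loopless.irrefl _)
      | exact absurd hadj hnac
      | exact absurd hadj hnbd
      | exact absurd hadj.symm hnac
      | exact absurd hadj.symm hnbd
      | (simp only [Sym2.eq_iff]; tauto)

end Helpers

/-- The generalized non-coprime graph of a group `G` with respect to a subgroup `H`:
vertices are the non-identity elements of `G`, and distinct vertices `a`, `b` are
adjacent iff `gcd(|a|,|b|) ≠ 1` and `a ∈ H` or `b ∈ H`. -/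
def genNonCoprimeGraph (G : Type*) [Group G] (H : Subgroup G) :
    SimpleGraph {x : G // x ≠ 1} where
  Adj a b := a ≠ b ∧ Nat.gcd (orderOf (a : G)) (orderOf (b : G)) ≠ 1 ∧
    ((a : G) ∈ H ∨ (b : G) ∈ H)
  symm := by
    refine ⟨fun a b h => ?_⟩
    exact ⟨h.1.symm, by rw [Nat.gcd_comm]; exact h.2.1, h.2.2.symm⟩
  loopless := by
    refine ⟨fun a h => ?_⟩
    exact h.1 rfl

lemma genAdj {G : Type*} [Group G] (H : Subgroup G) (a b : {x : G // x ≠ 1}) :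
    (genNonCoprimeGraph G H).Adj a b ↔ a ≠ b ∧
      Nat.gcd (orderOf (a : G)) (orderOf (b : G)) ≠ 1 ∧
      ((a : G) ∈ H ∨ (b : G) ∈ H) := Iff.rfl

theorem chordal_iff {G : Type*} [Group G] [Fintype G]
    (hG : IsCyclic G) (hn : 5 ≤ Fintype.card G)
    (H : Subgroup G) (hH : H ≠ ⊥) :
    (∀ (v : {g : G // g ≠ 1}) (w : (genNonCoprimeGraph G H).Walk v v),
        w.IsCycle → 4 ≤ w.length →
        ∃ x ∈ w.support, ∃ y ∈ w.support,
          (genNonCoprimeGraph G H).Adj x y ∧ s(x, y) ∉ w.edges) ↔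
      (∃ p : ℕ, p.Prime ∧ IsPGroup p H) ∨
      (H = ⊤ ∧ (Fintype.card G).primeFactors.card ≤ 3) := by
  classical
  have hn0 : Fintype.card G ≠ 0 := Fintype.card_ne_zero
  have gcdne : ∀ (k u v : ℕ), k.Prime → k ∣ u → k ∣ v → Nat.gcd u v ≠ 1 := by
    intro k u v hk h1 h2 hg
    exact hk.ne_one (Nat.dvd_one.mp (hg ▸ Nat.dvd_gcd h1 h2))
  constructor
  · -- chordal → RHS, by contradiction
    intro hL
    by_contra hrhs
    push_neg at hrhs
    obtain ⟨hnp, himp⟩ := hrhs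
    rcases eq_or_ne H ⊤ with rfl | hHtop
    · -- H = ⊤ and ω(n) ≥ 4 : build chordless C4 from four primes
      have h4 : 4 ≤ (Fintype.card G).primeFactors.card := by
        have := himp rfl; omega
      set N := (Fintype.card G).primeFactors with hNdef
      obtain ⟨p, hpN⟩ := Finset.card_pos.mp (show 0 < N.card by omega)
      obtain ⟨q, hqN⟩ := Finset.card_pos.mp (show 0 < (N.erase p).card by
        rw [Finset.card_erase_of_mem hpN]; omega)
      obtain ⟨r, hrN⟩ := Finset.card_pos.mp (show 0 < ((N.erase p).erase q).card by
        rw [Finset.card_erase_of_mem hqN, Finset.card_erase_of_mem hpN]; omega)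
      obtain ⟨s, hsN⟩ := Finset.card_pos.mp
        (show 0 < (((N.erase p).erase q).erase r).card by
          rw [Finset.card_erase_of_mem hrN, Finset.card_erase_of_mem hqN,
            Finset.card_erase_of_mem hpN]; omega)
      simp only [Finset.mem_erase] at hqN hrN hsN
      obtain ⟨hsr, hsq', hsp, hsN⟩ := hsN
      obtain ⟨hrq, hrp, hrN⟩ := hrN
      obtain ⟨hqp, hqN⟩ := hqN
      have hp : p.Prime := Nat.prime_of_mem_primeFactors hpN
      have hq : q.Prime := Nat.prime_of_mem_primeFactors hqN
      have hr : r.Prime := Nat.prime_of_mem_primeFactors hrN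
      have hs : s.Prime := Nat.prime_of_mem_primeFactors hsN
      have hpd : p ∣ Fintype.card G := Nat.dvd_of_mem_primeFactors hpN
      have hqd : q ∣ Fintype.card G := Nat.dvd_of_mem_primeFactors hqN
      have hrd : r ∣ Fintype.card G := Nat.dvd_of_mem_primeFactors hrN
      have hsd : s ∣ Fintype.card G := Nat.dvd_of_mem_primeFactors hsN
      have cop : ∀ u v : ℕ, u.Prime → v.Prime → u ≠ v → Nat.Coprime u v :=
        fun u v hu hv huv => (Nat.coprime_primes hu hv).mpr huv
      have h1d : p * q ∣ Fintype.card G :=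
        (cop p q hp hq (Ne.symm hqp)).mul_dvd_of_dvd_of_dvd hpd hqd
      have h2d : q * r ∣ Fintype.card G :=
        (cop q r hq hr (Ne.symm hrq)).mul_dvd_of_dvd_of_dvd hqd hrd
      have h3d : r * s ∣ Fintype.card G :=
        (cop r s hr hs (Ne.symm hsr)).mul_dvd_of_dvd_of_dvd hrd hsd
      have h4d : s * p ∣ Fintype.card G :=
        (cop s p hs hp hsp).mul_dvd_of_dvd_of_dvd hsd hpd
      obtain ⟨x1, hx1⟩ := myExistsOrder hG h1d (Nat.mul_pos hp.pos hq.pos)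
      obtain ⟨x2, hx2⟩ := myExistsOrder hG h2d (Nat.mul_pos hq.pos hr.pos)
      obtain ⟨x3, hx3⟩ := myExistsOrder hG h3d (Nat.mul_pos hr.pos hs.pos)
      obtain ⟨x4, hx4⟩ := myExistsOrder hG h4d (Nat.mul_pos hs.pos hp.pos)
      have hne1' : ∀ z : G, ∀ u v : ℕ, u.Prime → v.Prime → orderOf z = u * v → z ≠ 1 := by
        intro z u v hu hv ho hz
        rw [hz, orderOf_one] at ho
        exact hu.one_lt.ne' (Nat.eq_one_of_mul_eq_one_right ho.symm)
      set v1 : {g : G // g ≠ 1} := ⟨x1, hne1' x1 p q hp hq hx1⟩ with hv1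
      set v2 : {g : G // g ≠ 1} := ⟨x2, hne1' x2 q r hq hr hx2⟩ with hv2
      set v3 : {g : G // g ≠ 1} := ⟨x3, hne1' x3 r s hr hs hx3⟩ with hv3
      set v4 : {g : G // g ≠ 1} := ⟨x4, hne1' x4 s p hs hp hx4⟩ with hv4
      -- distinctness via distinct orders
      have hord12 : p * q ≠ q * r := by
        intro h
        rw [mul_comm p q] at h
        exact hrp (Nat.eq_of_mul_eq_mul_left hq.pos h).symm
      have hord23 : q * r ≠ r * s := by
        intro h
        rw [mul_comm q r] at h
        exact hsq' (Nat.eq_of_mul_eq_mul_left hr.pos h).symm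
      have hord34 : r * s ≠ s * p := by
        intro h
        rw [mul_comm r s] at h
        exact hrp (Nat.eq_of_mul_eq_mul_left hs.pos h)
      have hord41 : s * p ≠ p * q := by
        intro h
        rw [mul_comm s p] at h
        exact hsq' (Nat.eq_of_mul_eq_mul_left hp.pos h)
      have hord13 : p * q ≠ r * s := by
        intro h
        have : p ∣ r * s := h ▸ dvd_mul_right p q
        rcases (Nat.Prime.dvd_mul hp).mp this with h' | h'
        · exact hrp.symm ((Nat.prime_dvd_prime_iff_eq hp hr).mp h')
        · exact hsp.symm ((Nat.prime_dvd_prime_iff_eq hp hs).mp h')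
      have hord24 : q * r ≠ s * p := by
        intro h
        have : q ∣ s * p := h ▸ dvd_mul_right q r
        rcases (Nat.Prime.dvd_mul hq).mp this with h' | h'
        · exact hsq' ((Nat.prime_dvd_prime_iff_eq hq hs).mp h').symm
        · exact hqp ((Nat.prime_dvd_prime_iff_eq hq hp).mp h')
      have neOf : ∀ (y z : G) (ky kz : ℕ), orderOf y = ky → orderOf z = kz → ky ≠ kz →
          y ≠ z := by
        intro y z ky kz hy hz hyz h
        exact hyz (by rw [← hy, ← hz, h])
      have sne : ∀ (A B : {g : G // g ≠ 1}), (A : G) ≠ (B : G) → A ≠ B :=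
        fun A B h hh => h (congrArg Subtype.val hh)
      have h12a : (genNonCoprimeGraph G ⊤).Adj v1 v2 := by
        refine (genAdj _ _ _).mpr ⟨sne _ _ (neOf _ _ _ _ hx1 hx2 hord12), ?_, Or.inl trivial⟩
        rw [hx1, hx2]
        exact gcdne q _ _ hq (dvd_mul_left q p) (dvd_mul_right q r)
      have h23a : (genNonCoprimeGraph G ⊤).Adj v2 v3 := by
        refine (genAdj _ _ _).mpr ⟨sne _ _ (neOf _ _ _ _ hx2 hx3 hord23), ?_, Or.inl trivial⟩
        rw [hx2, hx3]
        exact gcdne r _ _ hr (dvd_mul_left r q) (dvd_mul_right r s)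
      have h34a : (genNonCoprimeGraph G ⊤).Adj v3 v4 := by
        refine (genAdj _ _ _).mpr ⟨sne _ _ (neOf _ _ _ _ hx3 hx4 hord34), ?_, Or.inl trivial⟩
        rw [hx3, hx4]
        exact gcdne s _ _ hs (dvd_mul_left s r) (dvd_mul_right s p)
      have h41a : (genNonCoprimeGraph G ⊤).Adj v4 v1 := by
        refine (genAdj _ _ _).mpr ⟨sne _ _ (neOf _ _ _ _ hx4 hx1 hord41), ?_, Or.inl trivial⟩
        rw [hx4, hx1]
        exact gcdne p _ _ hp (dvd_mul_left p s) (dvd_mul_right p q)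
      have hn13 : ¬ (genNonCoprimeGraph G ⊤).Adj v1 v3 := by
        rw [genAdj]
        rintro ⟨-, hgcd, -⟩
        apply hgcd
        rw [hx1, hx3]
        exact Nat.Coprime.mul ((cop p r hp hr hrp.symm).mul_right (cop p s hp hs hsp.symm))
          ((cop q r hq hr hrq.symm).mul_right (cop q s hq hs hsq'.symm)) |>.gcd_eq_one
      have hn24 : ¬ (genNonCoprimeGraph G ⊤).Adj v2 v4 := by
        rw [genAdj]
        rintro ⟨-, hgcd, -⟩
        apply hgcd
        rw [hx2, hx4]
        exact Nat.Coprime.mul ((cop q s hq hs hsq'.symm).mul_right (cop q p hq hp hqp))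
          ((cop r s hr hs hsr.symm).mul_right (cop r p hr hp hrp)) |>.gcd_eq_one
      exact myNoChord h12a h23a h34a h41a hn13 hn24
        (sne _ _ (neOf _ _ _ _ hx1 hx3 hord13)) (sne _ _ (neOf _ _ _ _ hx2 hx4 hord24)) hL
    · -- H ≠ ⊤ and H not a p-group
      set m := Nat.card H with hm
      have hm0 : m ≠ 0 := Nat.card_pos.ne'
      have hm1 : m ≠ 1 := fun h => hH (Subgroup.card_eq_one.mp h)
      have hmn : m ∣ Fintype.card G := by
        rw [hm, ← Nat.card_eq_fintype_card]
        exact Subgroup.card_subgroup_dvd_card H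
      obtain ⟨p, hp, hpm⟩ := Nat.exists_prime_and_dvd hm1
      obtain ⟨q, hq, hqm, hqp⟩ : ∃ q, q.Prime ∧ q ∣ m ∧ q ≠ p := by
        by_contra hc
        push_neg at hc
        have : m = p ^ m.primeFactorsList.length :=
          Nat.eq_prime_pow_of_unique_prime_dvd hm0 (fun hd hdm => hc _ hd hdm)
        exact hnp p hp (IsPGroup.of_card this)
      obtain ⟨a, ha⟩ := myExistsOrder hG (hpm.trans hmn) hp.pos
      obtain ⟨b, hb⟩ := myExistsOrder hG (hqm.trans hmn) hq.pos
      have haH : a ∈ H := (myMemIff hG H a).mpr (by rw [ha]; exact hpm)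
      have hbH : b ∈ H := (myMemIff hG H b).mpr (by rw [hb]; exact hqm)
      -- find r with v_r(m) < v_r(n)
      have hnetop : m ≠ Fintype.card G := by
        intro h
        exact hHtop (Subgroup.eq_top_of_card_eq H (by rw [← hm, h, Nat.card_eq_fintype_card]))
      have hndvdm : ¬ (Fintype.card G ∣ m) := fun h => hnetop (Nat.dvd_antisymm hmn h)
      obtain ⟨r, hrlt⟩ : ∃ r, m.factorization r < (Fintype.card G).factorization r := by
        by_contra hc
        push_neg at hc
        exact hndvdm ((Nat.factorization_le_iff_dvd hn0 hm0).mp (Finsupp.le_def.mpr hc))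
      have hrp : r.Prime := by
        by_contra hrnp
        have h0 := Nat.factorization_eq_zero_of_not_prime (Fintype.card G) hrnp
        omega
      set β := m.factorization r with hβ
      set t := Nat.lcm (p * q) (r ^ (β + 1)) with ht
      have hpqd : p * q ∣ Fintype.card G :=
        ((Nat.coprime_primes hp hq).mpr (Ne.symm hqp)).mul_dvd_of_dvd_of_dvd
          (hpm.trans hmn) (hqm.trans hmn)
      have hrd : r ^ (β + 1) ∣ Fintype.card G :=
        (hrp.pow_dvd_iff_le_factorization hn0).mpr hrlt
      have htn : t ∣ Fintype.card G := Nat.lcm_dvd hpqd hrd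
      have htpos : 0 < t := Nat.pos_of_ne_zero (Nat.lcm_ne_zero
        (Nat.mul_ne_zero hp.pos.ne' hq.pos.ne') (pow_ne_zero _ hrp.pos.ne'))
      have hpt : p ∣ t := (dvd_mul_right p q).trans (Nat.dvd_lcm_left _ _)
      have hqt : q ∣ t := (dvd_mul_left q p).trans (Nat.dvd_lcm_left _ _)
      have htm : ¬ t ∣ m := by
        intro h
        have : r ^ (β + 1) ∣ m := (Nat.dvd_lcm_right _ _).trans h
        rw [hrp.pow_dvd_iff_le_factorization hm0] at this
        omega
      have ht2 : ¬ t ∣ 2 := by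
        intro h
        have hp2 : p = 2 := (Nat.prime_dvd_prime_iff_eq hp Nat.prime_two).mp (hpt.trans h)
        have hq2 : q = 2 := (Nat.prime_dvd_prime_iff_eq hq Nat.prime_two).mp (hqt.trans h)
        exact hqp (hq2.trans hp2.symm)
      obtain ⟨x, hx⟩ := myExistsOrder hG htn htpos
      have hxH : x ∉ H := by
        intro hmem
        exact htm (hx ▸ (myMemIff hG H x).mp hmem)
      have hyH : x⁻¹ ∉ H := fun hmem => hxH ((Subgroup.inv_mem_iff H).mp hmem)
      have hy : orderOf x⁻¹ = t := by rw [orderOf_inv, hx]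
      have hxy : x ≠ x⁻¹ := by
        intro h
        apply ht2
        rw [← hx]
        apply orderOf_dvd_iff_pow_eq_one.mpr
        rw [pow_two]
        nth_rewrite 2 [h]
        exact mul_inv_cancel x
      have ha1 : a ≠ 1 := fun h => hp.ne_one (by rw [h, orderOf_one] at ha; exact ha.symm)
      have hb1 : b ≠ 1 := fun h => hq.ne_one (by rw [h, orderOf_one] at hb; exact hb.symm)
      have ht1 : t ≠ 1 := fun h => ht2 (h ▸ one_dvd 2)
      have hx1 : x ≠ 1 := fun h => ht1 (by rw [← hx, h, orderOf_one])
      have hy1 : x⁻¹ ≠ 1 := fun h => hx1 (inv_eq_one.mp h)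
      have hAX : (genNonCoprimeGraph G H).Adj ⟨a, ha1⟩ ⟨x, hx1⟩ := by
        refine (genAdj _ _ _).mpr ⟨fun h => hxH ((show a = x from congrArg Subtype.val h) ▸ haH), ?_, Or.inl haH⟩
        show Nat.gcd (orderOf a) (orderOf x) ≠ 1
        rw [ha, hx]
        exact gcdne p _ _ hp dvd_rfl hpt
      have hXB : (genNonCoprimeGraph G H).Adj ⟨x, hx1⟩ ⟨b, hb1⟩ := by
        refine (genAdj _ _ _).mpr ⟨fun h => hxH ((show x = b from congrArg Subtype.val h).symm ▸ hbH), ?_, Or.inr hbH⟩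
        show Nat.gcd (orderOf x) (orderOf b) ≠ 1
        rw [hx, hb]
        exact gcdne q _ _ hq hqt dvd_rfl
      have hBY : (genNonCoprimeGraph G H).Adj ⟨b, hb1⟩ ⟨x⁻¹, hy1⟩ := by
        refine (genAdj _ _ _).mpr ⟨fun h => hyH ((show b = x⁻¹ from congrArg Subtype.val h) ▸ hbH), ?_, Or.inl hbH⟩
        show Nat.gcd (orderOf b) (orderOf x⁻¹) ≠ 1
        rw [hb, hy]
        exact gcdne q _ _ hq dvd_rfl hqt
      have hYA : (genNonCoprimeGraph G H).Adj ⟨x⁻¹, hy1⟩ ⟨a, ha1⟩ := by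
        refine (genAdj _ _ _).mpr ⟨fun h => hyH ((show x⁻¹ = a from congrArg Subtype.val h).symm ▸ haH), ?_, Or.inr haH⟩
        show Nat.gcd (orderOf x⁻¹) (orderOf a) ≠ 1
        rw [hy, ha]
        exact gcdne p _ _ hp hpt dvd_rfl
      have hnAB : ¬ (genNonCoprimeGraph G H).Adj ⟨a, ha1⟩ ⟨b, hb1⟩ := by
        rw [genAdj]
        rintro ⟨-, hgcd, -⟩
        apply hgcd
        show Nat.gcd (orderOf a) (orderOf b) = 1
        rw [ha, hb]
        exact ((Nat.coprime_primes hp hq).mpr (Ne.symm hqp)).gcd_eq_one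
      have hnXY : ¬ (genNonCoprimeGraph G H).Adj ⟨x, hx1⟩ ⟨x⁻¹, hy1⟩ := by
        rw [genAdj]
        rintro ⟨-, -, hmem⟩
        rcases hmem with h | h
        · exact hxH h
        · exact hyH h
      have hAB : (⟨a, ha1⟩ : {g : G // g ≠ 1}) ≠ ⟨b, hb1⟩ :=
        fun h => hqp (show q = p by
          rw [← hb, ← (show a = b from congrArg Subtype.val h), ha])
      have hXY : (⟨x, hx1⟩ : {g : G // g ≠ 1}) ≠ ⟨x⁻¹, hy1⟩ :=
        fun h => hxy (congrArg Subtype.val h)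
      exact myNoChord hAX hXB hBY hYA hnAB hnXY hAB hXY hL
  · -- RHS → chordal
    rintro hrhs v w hcyc hlen
    rcases hrhs with ⟨p, hp, hpgrp⟩ | ⟨rfl, hw3⟩
    · -- H is a p-group
      have horder : ∀ z : {g : G // g ≠ 1}, (z : G) ∈ H →
          ∃ j, 0 < j ∧ orderOf (z : G) = p ^ j := by
        intro z hz
        obtain ⟨k, hk⟩ := hpgrp ⟨(z : G), hz⟩
        have hdvd : orderOf ((⟨(z : G), hz⟩ : H)) ∣ p ^ k := orderOf_dvd_of_pow_eq_one hk
        rw [Subgroup.orderOf_mk] at hdvd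
        obtain ⟨j, hjk, hj⟩ := (Nat.dvd_prime_pow hp).mp hdvd
        refine ⟨j, ?_, hj⟩
        rcases Nat.eq_zero_or_pos j with rfl | hpos
        · rw [pow_zero] at hj
          exact absurd (orderOf_eq_one_iff.mp hj) z.2
        · exact hpos
      have key : ∀ x y : {g : G // g ≠ 1}, (genNonCoprimeGraph G H).Adj x y →
          p ∣ orderOf (x : G) ∧ p ∣ orderOf (y : G) := by
        intro x y hadj
        rw [genAdj] at hadj
        obtain ⟨hne, hgcd, hmem⟩ := hadj
        obtain ⟨k, hk, hkd⟩ := Nat.exists_prime_and_dvd hgcd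
        have hkx : k ∣ orderOf (x : G) := hkd.trans (Nat.gcd_dvd_left _ _)
        have hky : k ∣ orderOf (y : G) := hkd.trans (Nat.gcd_dvd_right _ _)
        rcases hmem with hxH | hyH
        · obtain ⟨j, hj0, hjx⟩ := horder x hxH
          have hkp : k = p :=
            (Nat.prime_dvd_prime_iff_eq hk hp).mp (hk.dvd_of_dvd_pow (hjx ▸ hkx))
          exact ⟨hjx ▸ dvd_pow_self p hj0.ne', hkp ▸ hky⟩
        · obtain ⟨j, hj0, hjy⟩ := horder y hyH
          have hkp : k = p :=
            (Nat.prime_dvd_prime_iff_eq hk hp).mp (hk.dvd_of_dvd_pow (hjy ▸ hky))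
          exact ⟨hkp ▸ hkx, hjy ▸ dvd_pow_self p hj0.ne'⟩
      rcases eq_or_lt_of_le hlen with hl4 | hl5
      · obtain ⟨a₀, a₁, a₂, a₃, m0, m1, m2, m3, n01, n02, n03, n12, n13, n23,
          h01, h12, h23, h30, e02, e13⟩ := myChord4 w hcyc hl4.symm
        rcases ((genAdj _ _ _).mp h12).2.2 with h1H | h2H
        · refine ⟨a₁, m1, a₃, m3, (genAdj _ _ _).mpr ⟨n13, ?_, Or.inl h1H⟩, e13⟩
          exact gcdne p _ _ hp (key _ _ h12).1 (key _ _ h23).2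
        · refine ⟨a₀, m0, a₂, m2, (genAdj _ _ _).mpr ⟨n02, ?_, Or.inr h2H⟩, e02⟩
          exact gcdne p _ _ hp (key _ _ h01).1 (key _ _ h12).2
      · obtain ⟨a₀, a₁, a₂, a₃, a₄, m0, m1, m2, m3, m4, n02, n03, n13, n14, n24,
          h01, h12, h23, h34, e02, e03, e13, e14, e24⟩ := myChord5 w hcyc hl5
        rcases ((genAdj _ _ _).mp h12).2.2 with h1H | h2H
        · refine ⟨a₁, m1, a₃, m3, (genAdj _ _ _).mpr ⟨n13, ?_, Or.inl h1H⟩, e13⟩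
          exact gcdne p _ _ hp (key _ _ h12).1 (key _ _ h23).2
        · refine ⟨a₀, m0, a₂, m2, (genAdj _ _ _).mpr ⟨n02, ?_, Or.inr h2H⟩, e02⟩
          exact gcdne p _ _ hp (key _ _ h01).1 (key _ _ h12).2
    · -- H = ⊤ and ω(n) ≤ 3
      by_contra hno
      push_neg at hno
      have hnadj : ∀ x y : {g : G // g ≠ 1}, x ∈ w.support → y ∈ w.support → x ≠ y →
          s(x, y) ∉ w.edges →
          Disjoint (orderOf (x : G)).primeFactors (orderOf (y : G)).primeFactors := by
        intro x y hxs hys hne hedge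
        have hna : ¬ (genNonCoprimeGraph G ⊤).Adj x y :=
          fun hadj => hedge (hno x hxs y hys hadj)
        rw [genAdj] at hna
        push_neg at hna
        have hg : Nat.gcd (orderOf (x : G)) (orderOf (y : G)) = 1 := by
          by_contra hgg
          exact (hna hne hgg).1 (Subgroup.mem_top _)
        exact Nat.Coprime.disjoint_primeFactors hg
      have hSsub : ∀ x : {g : G // g ≠ 1},
          (orderOf (x : G)).primeFactors ⊆ (Fintype.card G).primeFactors :=
        fun x => Nat.primeFactors_mono orderOf_dvd_card hn0
      have hSne : ∀ x : {g : G // g ≠ 1}, (orderOf (x : G)).primeFactors.Nonempty := by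
        intro x
        rw [Nat.nonempty_primeFactors]
        have h1 : orderOf (x : G) ≠ 1 := fun h => x.2 (orderOf_eq_one_iff.mp h)
        have h0 : 0 < orderOf (x : G) := orderOf_pos _
        omega
      have hadjS : ∀ x y : {g : G // g ≠ 1}, (genNonCoprimeGraph G ⊤).Adj x y →
          ((orderOf (x : G)).primeFactors ∩ (orderOf (y : G)).primeFactors).Nonempty := by
        intro x y hadj
        rw [genAdj] at hadj
        obtain ⟨k, hk, hkd⟩ := Nat.exists_prime_and_dvd hadj.2.1
        have h0x : orderOf (x : G) ≠ 0 := (orderOf_pos _).ne'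
        have h0y : orderOf (y : G) ≠ 0 := (orderOf_pos _).ne'
        exact ⟨k, Finset.mem_inter.mpr
          ⟨Nat.mem_primeFactors.mpr ⟨hk, hkd.trans (Nat.gcd_dvd_left _ _), h0x⟩,
           Nat.mem_primeFactors.mpr ⟨hk, hkd.trans (Nat.gcd_dvd_right _ _), h0y⟩⟩⟩
      rcases eq_or_lt_of_le hlen with hl4 | hl5
      · obtain ⟨a₀, a₁, a₂, a₃, m0, m1, m2, m3, n01, n02, n03, n12, n13, n23,
          h01, h12, h23, h30, e02, e13⟩ := myChord4 w hcyc hl4.symm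
        exact myFinset4 hw3 (hSsub a₀) (hSsub a₂) (hSne a₀) (hSne a₂)
          (hadjS _ _ h01) (hadjS _ _ h12) (hadjS _ _ h23) (hadjS _ _ h30)
          (hnadj _ _ m0 m2 n02 e02) (hnadj _ _ m1 m3 n13 e13)
      · obtain ⟨a₀, a₁, a₂, a₃, a₄, m0, m1, m2, m3, m4, n02, n03, n13, n14, n24,
          h01, h12, h23, h34, e02, e03, e13, e14, e24⟩ := myChord5 w hcyc hl5
        exact myFinset5 hw3 (hSsub a₀) (hSsub a₂) (hSsub a₃) (hSne a₀)
          (hadjS _ _ h12) (hadjS _ _ h23) (hadjS _ _ h34)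
          (hnadj _ _ m0 m2 n02 e02) (hnadj _ _ m0 m3 n03 e03)
          (hnadj _ _ m1 m3 n13 e13) (hnadj _ _ m2 m4 n24 e24)
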